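/- The configuration B = {(1,0,0), (0,1,0), (1,1,1), (1,1,2), (1,2,3), (1,2,4)} is a Hilbert basis for the cone spanned by (1,0,0), (0,1,0) and (1,2,4): it minimally generates the monoid of lattice points of this cone. -/

import Mathlib

/-- `x ∈ ℝ^m` lies in the cone (nonnegative real span) of `B ⊆ ℤ^m`. -/
def ConeM {m : ℕ} (B : Set (Fin m → ℤ)) (x : Fin m → ℝ) : Prop :=
  ∃ (s : Finset (Fin m → ℤ)) (c : (Fin m → ℤ) → ℝ),
    ↑s ⊆ B ∧ (∀ b, 0 ≤ c b) ∧ ∀ i, x i = ∑ b ∈ s, c b * (b i : ℝ)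

/-- `z ∈ ℤ^m` is a nonnegative integer combination of elements of `B ⊆ ℤ^m`. -/
def NNCombM {m : ℕ} (B : Set (Fin m → ℤ)) (z : Fin m → ℤ) : Prop :=
  ∃ (s : Finset (Fin m → ℤ)) (c : (Fin m → ℤ) → ℕ),
    ↑s ⊆ B ∧ ∀ i, z i = ∑ b ∈ s, (c b : ℤ) * b i

/-- `B ⊆ ℤ^m` is supernormal if for every subset `B' ⊆ B` every lattice point of
`cone(B')` is a nonnegative integer combination of `B ∩ cone(B')`. -/
def SupernormalM {m : ℕ} (B : Set (Fin m → ℤ)) : Prop :=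
  ∀ B' ⊆ B, ∀ z : Fin m → ℤ, ConeM B' (fun i => (z i : ℝ)) →
    NNCombM {b ∈ B | ConeM B' (fun i => (b i : ℝ))} z

/-- `B ⊆ ℤ^m` is normal if every lattice point of `cone(B)` is a nonnegative
integer combination of `B`. -/
def NormalM {m : ℕ} (B : Set (Fin m → ℤ)) : Prop :=
  ∀ z : Fin m → ℤ, ConeM B (fun i => (z i : ℝ)) → NNCombM B z

lemma sum3' {M : Type*} [AddCommMonoid M] (f : (Fin 3 → ℤ) → M) :
    ∑ b ∈ ({![1,0,0], ![0,1,0], ![1,2,4]} : Finset (Fin 3 → ℤ)), f b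
    = f ![1,0,0] + (f ![0,1,0] + f ![1,2,4]) := by
  rw [Finset.sum_insert (by decide), Finset.sum_insert (by decide), Finset.sum_singleton]

lemma sum6' {M : Type*} [AddCommMonoid M] (f : (Fin 3 → ℤ) → M) :
    ∑ b ∈ ({![1,0,0], ![0,1,0], ![1,1,1], ![1,1,2], ![1,2,3], ![1,2,4]} : Finset (Fin 3 → ℤ)), f b
    = f ![1,0,0] + (f ![0,1,0] + (f ![1,1,1] + (f ![1,1,2] + (f ![1,2,3] + f ![1,2,4])))) := by
  rw [Finset.sum_insert (by decide), Finset.sum_insert (by decide),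
    Finset.sum_insert (by decide), Finset.sum_insert (by decide),
    Finset.sum_insert (by decide), Finset.sum_singleton]

lemma cone_mk (a b c : ℝ) (ha : 0 ≤ a) (hb : 0 ≤ b) (hc : 0 ≤ c) (x : Fin 3 → ℝ)
    (h0 : x 0 = a + c) (h1 : x 1 = b + 2*c) (h2 : x 2 = 4*c) :
    ConeM ({![1,0,0], ![0,1,0], ![1,2,4]} : Set (Fin 3 → ℤ)) x := by
  refine ⟨{![1,0,0], ![0,1,0], ![1,2,4]},
    fun v => if v = ![1,0,0] then a else if v = ![0,1,0] then b else if v = ![1,2,4] then c else 0,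
    ?_, ?_, ?_⟩
  · intro v hv; simpa using hv
  · intro v; dsimp only; split_ifs <;> simp [ha, hb, hc]
  · intro i
    rw [sum3']
    beta_reduce
    rw [if_pos rfl, if_neg (by decide), if_pos rfl, if_neg (by decide), if_neg (by decide),
      if_pos rfl]
    fin_cases i <;> simp [h0, h1, h2] <;> ring

lemma nncomb_mk (z : Fin 3 → ℤ) (A B C1 C2 C3 C4 : ℕ)
    (h0 : z 0 = A + C1 + C2 + C3 + C4)
    (h1 : z 1 = B + C1 + C2 + 2*C3 + 2*C4)
    (h2 : z 2 = C1 + 2*C2 + 3*C3 + 4*C4) :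
    NNCombM ({![1,0,0], ![0,1,0], ![1,1,1], ![1,1,2], ![1,2,3], ![1,2,4]} : Set (Fin 3 → ℤ)) z := by
  refine ⟨{![1,0,0], ![0,1,0], ![1,1,1], ![1,1,2], ![1,2,3], ![1,2,4]},
    fun v => if v = ![1,0,0] then A else if v = ![0,1,0] then B else if v = ![1,1,1] then C1
      else if v = ![1,1,2] then C2 else if v = ![1,2,3] then C3 else if v = ![1,2,4] then C4 else 0,
    ?_, ?_⟩
  · intro v hv; simpa using hv
  · intro i
    rw [sum6']
    beta_reduce
    rw [if_pos rfl, if_neg (by decide), if_pos rfl,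
      if_neg (by decide), if_neg (by decide), if_pos rfl,
      if_neg (by decide), if_neg (by decide), if_neg (by decide), if_pos rfl,
      if_neg (by decide), if_neg (by decide), if_neg (by decide), if_neg (by decide), if_pos rfl,
      if_neg (by decide), if_neg (by decide), if_neg (by decide), if_neg (by decide),
      if_neg (by decide), if_pos rfl]
    fin_cases i <;> simp <;> omega

lemma cone_ineq (z : Fin 3 → ℤ)
    (h : ConeM ({![1,0,0], ![0,1,0], ![1,2,4]} : Set (Fin 3 → ℤ)) (fun i => (z i : ℝ))) :
    0 ≤ z 2 ∧ z 2 ≤ 4 * z 0 ∧ z 2 ≤ 2 * z 1 := by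
  obtain ⟨s, c, hs, hc, heq⟩ := h
  have key : ∀ a0 a1 a2 : ℤ, 0 ≤ a0 → 0 ≤ a1 → 0 ≤ a0 + 2*a1 + 4*a2 →
      0 ≤ a0 * z 0 + a1 * z 1 + a2 * z 2 := by
    intro a0 a1 a2 p0 p1 p2
    have hreal : ((a0 * z 0 + a1 * z 1 + a2 * z 2 : ℤ) : ℝ)
        = ∑ b ∈ s, c b * ((a0 * b 0 + a1 * b 1 + a2 * b 2 : ℤ) : ℝ) := by
      push_cast
      have h0 := heq 0; have h1 := heq 1; have h2 := heq 2
      simp only at h0 h1 h2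
      rw [h0, h1, h2, Finset.mul_sum, Finset.mul_sum, Finset.mul_sum,
        ← Finset.sum_add_distrib, ← Finset.sum_add_distrib]
      exact Finset.sum_congr rfl (fun b _ => by ring)
    have hnn : (0:ℝ) ≤ ((a0 * z 0 + a1 * z 1 + a2 * z 2 : ℤ) : ℝ) := by
      rw [hreal]
      apply Finset.sum_nonneg
      intro b hb
      have hb' := hs hb
      simp only [Set.mem_insert_iff, Set.mem_singleton_iff] at hb'
      apply mul_nonneg (hc b)
      rcases hb' with rfl | rfl | rfl <;> simp
      · exact_mod_cast p0
      · exact_mod_cast p1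
      · have h : ((0:ℤ):ℝ) ≤ ((a0 + a1 * 2 + a2 * 4 : ℤ) : ℝ) := Int.cast_le.mpr (by linarith)
        push_cast at h; linarith
    exact_mod_cast hnn
  refine ⟨?_, ?_, ?_⟩
  · have := key 0 0 1 (by norm_num) (by norm_num) (by norm_num); linarith
  · have := key 4 0 (-1) (by norm_num) (by norm_num) (by norm_num); linarith
  · have := key 0 2 (-1) (by norm_num) (by norm_num) (by norm_num); linarith

lemma expand_diff (b z : Fin 3 → ℤ)
    (h : NNCombM (({![1,0,0], ![0,1,0], ![1,1,1], ![1,1,2], ![1,2,3], ![1,2,4]} :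
        Set (Fin 3 → ℤ)) \ {b}) z) :
    ∃ n : (Fin 3 → ℤ) → ℕ, n b = 0 ∧
      ∀ i, z i = (n ![1,0,0] : ℤ) * ![1,0,0] i + ((n ![0,1,0] : ℤ) * ![0,1,0] i +
        ((n ![1,1,1] : ℤ) * ![1,1,1] i + ((n ![1,1,2] : ℤ) * ![1,1,2] i +
        ((n ![1,2,3] : ℤ) * ![1,2,3] i + (n ![1,2,4] : ℤ) * ![1,2,4] i)))) := by
  obtain ⟨s, c, hs, heq⟩ := h
  have hbs : b ∉ s := by
    intro hb
    exact (hs hb).2 rfl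
  refine ⟨fun x => if x ∈ s then c x else 0, by simp [hbs], ?_⟩
  intro i
  have hsub : s ⊆ ({![1,0,0], ![0,1,0], ![1,1,1], ![1,1,2], ![1,2,3], ![1,2,4]} :
      Finset (Fin 3 → ℤ)) := by
    intro x hx
    have := (hs hx).1
    simp only [Set.mem_insert_iff, Set.mem_singleton_iff] at this
    simp only [Finset.mem_insert, Finset.mem_singleton]
    exact this
  have key : ∑ x ∈ s, (c x : ℤ) * x i
      = ∑ x ∈ ({![1,0,0], ![0,1,0], ![1,1,1], ![1,1,2], ![1,2,3], ![1,2,4]} :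
          Finset (Fin 3 → ℤ)), ((if x ∈ s then c x else 0 : ℕ) : ℤ) * x i := by
    rw [← Finset.sum_subset hsub (fun x _ hx => by simp [hx])]
    exact Finset.sum_congr rfl (fun x hx => by simp [hx])
  rw [heq i, key, sum6']

/-- `B = {(1,0,0),(0,1,0),(1,1,1),(1,1,2),(1,2,3),(1,2,4)}` is a Hilbert basis for the
cone `C` spanned by `(1,0,0),(0,1,0),(1,2,4)`: it is pointed, consists of lattice points
of `C`, generates the monoid `C ∩ ℤ³`, and no proper subset generates it. -/
theorem stmt9 :
    (∃ u : Fin 3 → ℝ, ∀ b ∈ ({![1,0,0], ![0,1,0], ![1,1,1], ![1,1,2], ![1,2,3], ![1,2,4]} : Set (Fin 3 → ℤ)),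
        0 < ∑ i, (b i : ℝ) * u i) ∧
    (∀ b ∈ ({![1,0,0], ![0,1,0], ![1,1,1], ![1,1,2], ![1,2,3], ![1,2,4]} : Set (Fin 3 → ℤ)),
      ConeM ({![1,0,0], ![0,1,0], ![1,2,4]} : Set (Fin 3 → ℤ)) (fun i => (b i : ℝ))) ∧
    (∀ z : Fin 3 → ℤ, ConeM ({![1,0,0], ![0,1,0], ![1,2,4]} : Set (Fin 3 → ℤ)) (fun i => (z i : ℝ)) →
      NNCombM ({![1,0,0], ![0,1,0], ![1,1,1], ![1,1,2], ![1,2,3], ![1,2,4]} : Set (Fin 3 → ℤ)) z) ∧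
    (∀ b ∈ ({![1,0,0], ![0,1,0], ![1,1,1], ![1,1,2], ![1,2,3], ![1,2,4]} : Set (Fin 3 → ℤ)),
      ¬ ∀ z : Fin 3 → ℤ,
        ConeM ({![1,0,0], ![0,1,0], ![1,2,4]} : Set (Fin 3 → ℤ)) (fun i => (z i : ℝ)) →
        NNCombM (({![1,0,0], ![0,1,0], ![1,1,1], ![1,1,2], ![1,2,3], ![1,2,4]} : Set (Fin 3 → ℤ)) \ {b}) z) := by
  have hcone : ∀ b ∈ ({![1,0,0], ![0,1,0], ![1,1,1], ![1,1,2], ![1,2,3], ![1,2,4]} :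
      Set (Fin 3 → ℤ)),
      ConeM ({![1,0,0], ![0,1,0], ![1,2,4]} : Set (Fin 3 → ℤ)) (fun i => (b i : ℝ)) := by
    intro b hb
    simp only [Set.mem_insert_iff, Set.mem_singleton_iff] at hb
    rcases hb with rfl | rfl | rfl | rfl | rfl | rfl
    · exact cone_mk 1 0 0 (by norm_num) (by norm_num) (by norm_num) _
        (by norm_num) (by norm_num) (by norm_num [Matrix.cons_val_two, Matrix.tail_cons, Matrix.head_cons])
    · exact cone_mk 0 1 0 (by norm_num) (by norm_num) (by norm_num) _
        (by norm_num) (by norm_num) (by norm_num [Matrix.cons_val_two, Matrix.tail_cons, Matrix.head_cons])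
    · exact cone_mk (3/4) (1/2) (1/4) (by norm_num) (by norm_num) (by norm_num) _
        (by norm_num) (by norm_num) (by norm_num [Matrix.cons_val_two, Matrix.tail_cons, Matrix.head_cons])
    · exact cone_mk (1/2) 0 (1/2) (by norm_num) (by norm_num) (by norm_num) _
        (by norm_num) (by norm_num) (by norm_num [Matrix.cons_val_two, Matrix.tail_cons, Matrix.head_cons])
    · exact cone_mk (1/4) (1/2) (3/4) (by norm_num) (by norm_num) (by norm_num) _
        (by norm_num) (by norm_num) (by norm_num [Matrix.cons_val_two, Matrix.tail_cons, Matrix.head_cons])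
    · exact cone_mk 0 0 1 (by norm_num) (by norm_num) (by norm_num) _
        (by norm_num) (by norm_num) (by norm_num [Matrix.cons_val_two, Matrix.tail_cons, Matrix.head_cons])
  refine ⟨⟨![1,1,0], ?_⟩, hcone, ?_, ?_⟩
  · intro b hb
    simp only [Set.mem_insert_iff, Set.mem_singleton_iff] at hb
    rcases hb with rfl | rfl | rfl | rfl | rfl | rfl <;>
      simp [Fin.sum_univ_three] <;> norm_num
  · -- generation
    intro z hz
    obtain ⟨h0, h1, h2⟩ := cone_ineq z hz
    have hcase : z 2 % 4 = 0 ∨ z 2 % 4 = 1 ∨ z 2 % 4 = 2 ∨ z 2 % 4 = 3 := by omega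
    rcases hcase with h | h | h | h
    · exact nncomb_mk z (z 0 - z 2 / 4).toNat (z 1 - 2 * (z 2 / 4)).toNat 0 0 0 (z 2 / 4).toNat
        (by omega) (by omega) (by omega)
    · exact nncomb_mk z (z 0 - z 2 / 4 - 1).toNat (z 1 - 2 * (z 2 / 4) - 1).toNat 1 0 0
        (z 2 / 4).toNat (by omega) (by omega) (by omega)
    · exact nncomb_mk z (z 0 - z 2 / 4 - 1).toNat (z 1 - 2 * (z 2 / 4) - 1).toNat 0 1 0
        (z 2 / 4).toNat (by omega) (by omega) (by omega)
    · exact nncomb_mk z (z 0 - z 2 / 4 - 1).toNat (z 1 - 2 * (z 2 / 4) - 2).toNat 0 0 1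
        (z 2 / 4).toNat (by omega) (by omega) (by omega)
  · -- minimality
    intro b hb H
    have hzb := H b (hcone b hb)
    obtain ⟨n, hnb, hn⟩ := expand_diff b b hzb
    have e0 := hn 0; have e1 := hn 1; have e2 := hn 2
    simp only [Matrix.cons_val_zero, Matrix.cons_val_one, Matrix.head_cons,
      Matrix.cons_val_two, Matrix.tail_cons] at e0 e1 e2
    simp only [Set.mem_insert_iff, Set.mem_singleton_iff] at hb
    rcases hb with rfl | rfl | rfl | rfl | rfl | rfl <;>
      simp only [Matrix.cons_val_zero, Matrix.cons_val_one, Matrix.head_cons,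
        Matrix.cons_val_two, Matrix.tail_cons] at e0 e1 e2 hnb <;>
      omega
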